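/- Suppose u ≤ 0 is measurable on a probability space (X, dV), Z(γ) := ∫_X e^{-γu}dV is finite for γ ∈ (0,c), and the lower bound (d/dγ)log Z(γ) ≥ (1/A)·1/(c-γ) - B(γ^{-2} + δ^{-2}) holds on (0,c) for constants A, B > 0 and δ ∈ (0,1). Then for every γ ∈ (0,c): Z(γ) ≥ e^{-b(γ^{-1} + γδ^{-2})} / (c-γ)^{1/A} for a constant b depending only on A and B. -/

import Mathlib

open MeasureTheory Real Set

lemma stmt18_mul_exp_neg_le {s η : ℝ} (hs : 0 ≤ s) (hη : 0 < η) :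
    s * Real.exp (-(η * s)) ≤ η⁻¹ := by
  have h1 : η * s ≤ Real.exp (η * s) := by linarith [Real.add_one_le_exp (η * s)]
  have key : η * s * Real.exp (-(η * s)) ≤ 1 := by
    calc η * s * Real.exp (-(η * s)) ≤ Real.exp (η * s) * Real.exp (-(η * s)) :=
          mul_le_mul_of_nonneg_right h1 (Real.exp_pos _).le
      _ = 1 := by rw [← Real.exp_add]; simp
  have hrw : s * Real.exp (-(η * s)) = η * s * Real.exp (-(η * s)) / η := by
    field_simp
  rw [hrw, inv_eq_one_div]
  gcongr

lemma stmt18_Zdiff {X : Type} [MeasurableSpace X] (dV : Measure X)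
    (u : X → ℝ) (hu : ∀ x, u x ≤ 0) (hm : Measurable u) (c : ℝ)
    (hint : ∀ γ ∈ Set.Ioo 0 c, Integrable (fun x => Real.exp (-γ * u x)) dV)
    {γ₀ : ℝ} (hγ₀ : γ₀ ∈ Set.Ioo 0 c) :
    DifferentiableAt ℝ (fun γ => ∫ x, Real.exp (-γ * u x) ∂dV) γ₀ := by
  obtain ⟨h0, h1⟩ := hγ₀
  set γ' : ℝ := (γ₀ + c) / 2 with hγ'def
  have hγ' : γ' ∈ Set.Ioo 0 c := ⟨by simp only [hγ'def]; linarith, by simp only [hγ'def]; linarith⟩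
  have hεpos : (0:ℝ) < (c - γ₀) / 4 := by linarith
  have key := hasDerivAt_integral_of_dominated_loc_of_deriv_le
      (μ := dV) (F := fun t x => Real.exp (-t * u x))
      (F' := fun t x => Real.exp (-t * u x) * (-1 * u x))
      (x₀ := γ₀) (bound := fun x => ((c - γ₀) / 4)⁻¹ * Real.exp (-γ' * u x))
      (Metric.ball_mem_nhds γ₀ hεpos)
      (Filter.Eventually.of_forall (fun t =>
        (Real.measurable_exp.comp (hm.const_mul (-t))).aestronglyMeasurable))
      (hint γ₀ ⟨h0, h1⟩)
      (((Real.measurable_exp.comp (hm.const_mul (-γ₀))).mul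
        (measurable_const.mul hm)).aestronglyMeasurable)
      ?_ (((hint γ' hγ').const_mul _)) ?_
  · exact key.2.differentiableAt
  · -- bound
    refine Filter.Eventually.of_forall (fun x => fun t ht => ?_)
    have hs : 0 ≤ -u x := by linarith [hu x]
    have hη : (0:ℝ) < γ' - t := by
      have := Metric.mem_ball.1 ht
      have := abs_lt.1 this
      simp only [hγ'def]; cases this; linarith
    have hη4 : (c - γ₀) / 4 ≤ γ' - t := by
      have := Metric.mem_ball.1 ht
      have h2 := abs_lt.1 this
      simp only [hγ'def]; cases h2; linarith
    have hsplit : Real.exp (-t * u x) = Real.exp (-γ' * u x) * Real.exp (-((γ' - t) * (-u x))) := by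
      rw [← Real.exp_add]; ring_nf
    have hb : Real.exp (-((γ' - t) * (-u x))) * (-u x) ≤ (γ' - t)⁻¹ := by
      have := stmt18_mul_exp_neg_le hs hη
      linarith [this]
    have hinv : (γ' - t)⁻¹ ≤ ((c - γ₀) / 4)⁻¹ := by
      apply inv_anti₀ hεpos hη4
    have hnorm : ‖Real.exp (-t * u x) * (-1 * u x)‖ = Real.exp (-t * u x) * (-u x) := by
      rw [Real.norm_eq_abs, abs_of_nonneg]
      · ring_nf
      · have := Real.exp_pos (-t * u x); nlinarith
    rw [hnorm, hsplit]
    calc Real.exp (-γ' * u x) * Real.exp (-((γ' - t) * (-u x))) * (-u x)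
        = Real.exp (-γ' * u x) * (Real.exp (-((γ' - t) * (-u x))) * (-u x)) := by ring
      _ ≤ Real.exp (-γ' * u x) * ((c - γ₀) / 4)⁻¹ :=
          mul_le_mul_of_nonneg_left (hb.trans hinv) (Real.exp_pos _).le
      _ = ((c - γ₀) / 4)⁻¹ * Real.exp (-γ' * u x) := by ring
  · -- differentiability of integrand
    refine Filter.Eventually.of_forall (fun x => fun t _ => ?_)
    have h : HasDerivAt (fun t : ℝ => -t * u x) (-1 * u x) t := by
      simpa using ((hasDerivAt_id t).neg.mul_const (u x))
    exact h.exp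

/-- Integrating the differential lower bound on `(log Z)'` yields a universal lower bound
on `Z(γ) = ∫ e^{-γu} dV`: there is a constant `b` depending only on `A` and `B` such that
`Z(γ) ≥ e^{-b(γ⁻¹ + γδ⁻²)}/(c-γ)^{1/A}` for all `γ ∈ (0,c)`. -/
theorem stmt18 (A B : ℝ) (hA : 0 < A) (hB : 0 < B) :
    ∃ b : ℝ, ∀ (X : Type) (_ : MeasurableSpace X) (dV : Measure X),
      IsProbabilityMeasure dV →
      ∀ (u : X → ℝ), (∀ x, u x ≤ 0) → Measurable u →
      ∀ (c δ : ℝ), 0 < c → δ ∈ Set.Ioo (0:ℝ) 1 →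
      (∀ γ ∈ Set.Ioo 0 c, Integrable (fun x => Real.exp (-γ * u x)) dV) →
      (∀ γ ∈ Set.Ioo 0 c,
        1 / A * (1 / (c - γ)) - B * (γ⁻¹ ^ 2 + δ⁻¹ ^ 2) ≤
          deriv (fun γ => Real.log (∫ x, Real.exp (-γ * u x) ∂dV)) γ) →
      ∀ γ ∈ Set.Ioo 0 c,
        Real.exp (-b * (γ⁻¹ + γ * δ⁻¹ ^ 2)) / (c - γ) ^ (1 / A) ≤
          ∫ x, Real.exp (-γ * u x) ∂dV := by
  refine ⟨2 / A + B, ?_⟩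
  intro X _ dV hprob u hu hm c δ hc hδ hint hderiv γ hγ
  obtain ⟨hγ0, hγc⟩ := hγ
  set Z : ℝ → ℝ := fun t => ∫ x, Real.exp (-t * u x) ∂dV with hZdef
  set f : ℝ → ℝ := fun γ => Real.log (∫ x, Real.exp (-γ * u x) ∂dV) with hfdef
  -- Z ≥ 1 on (0,c)
  have hZ1 : ∀ t ∈ Set.Ioo (0:ℝ) c, 1 ≤ Z t := by
    intro t ht
    have hcalc : (1:ℝ) = ∫ _x, (1:ℝ) ∂dV := by simp
    rw [hZdef]
    calc (1:ℝ) = ∫ _x, (1:ℝ) ∂dV := hcalc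
      _ ≤ ∫ x, Real.exp (-t * u x) ∂dV := by
          apply integral_mono (integrable_const 1) (hint t ht)
          intro x
          exact Real.one_le_exp (by nlinarith [hu x, ht.1])
  -- differentiability of f on (0,c)
  have hfd : ∀ t ∈ Set.Ioo (0:ℝ) c, DifferentiableAt ℝ f t := by
    intro t ht
    have hZd := stmt18_Zdiff dV u hu hm c hint ht
    have hZpos : Z t ≠ 0 := by have := hZ1 t ht; positivity
    exact hZd.log hZpos
  -- antiderivative F
  set F : ℝ → ℝ := fun t => -(1 / A) * Real.log (c - t) + B * t⁻¹ - B * δ⁻¹ ^ 2 * t with hFdef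
  have hF' : ∀ t ∈ Set.Ioo (0:ℝ) c,
      HasDerivAt F (1 / A * (1 / (c - t)) - B * (t⁻¹ ^ 2 + δ⁻¹ ^ 2)) t := by
    intro t ht
    obtain ⟨ht0, htc⟩ := ht
    have hct : c - t ≠ 0 := ne_of_gt (by linarith)
    have h1 : HasDerivAt (fun t : ℝ => c - t) (0 - 1) t :=
      (hasDerivAt_const t c).sub (hasDerivAt_id t)
    have h2 : HasDerivAt (fun t : ℝ => Real.log (c - t)) ((0 - 1) / (c - t)) t := h1.log hct
    have h3 : HasDerivAt (fun t : ℝ => -(1 / A) * Real.log (c - t))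
        (-(1 / A) * ((0 - 1) / (c - t))) t := h2.const_mul _
    have h4 : HasDerivAt (fun t : ℝ => B * t⁻¹) (B * (-(t ^ 2)⁻¹)) t :=
      (hasDerivAt_inv (ne_of_gt ht0)).const_mul B
    have h5 : HasDerivAt (fun t : ℝ => B * δ⁻¹ ^ 2 * t) (B * δ⁻¹ ^ 2 * 1) t :=
      (hasDerivAt_id t).const_mul _
    have h6 := (h3.add h4).sub h5
    convert h6 using 1
    · rfl
    · rfl
    · rfl
    rw [inv_pow]
    field_simp
    ring
  -- monotonicity of f - F on [γ/2, γ]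
  have hsub : Set.Icc (γ / 2) γ ⊆ Set.Ioo (0:ℝ) c := by
    intro t ht
    exact ⟨by linarith [ht.1], by linarith [ht.2]⟩
  set g : ℝ → ℝ := fun t => f t - F t with hgdef
  have hgd : ∀ t ∈ Set.Ioo (0:ℝ) c, DifferentiableAt ℝ g t := by
    intro t ht
    exact (hfd t ht).sub (hF' t ht).differentiableAt
  have hmono : MonotoneOn g (Set.Icc (γ / 2) γ) := by
    apply monotoneOn_of_deriv_nonneg (convex_Icc _ _)
    · intro t ht
      exact (hgd t (hsub ht)).continuousAt.continuousWithinAt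
    · rw [interior_Icc]
      intro t ht
      exact (hgd t (hsub (Ioo_subset_Icc_self ht))).differentiableWithinAt
    · rw [interior_Icc]
      intro t ht
      have htc : t ∈ Set.Ioo (0:ℝ) c := hsub (Ioo_subset_Icc_self ht)
      have hd : deriv g t = deriv f t - deriv F t :=
        deriv_sub (hfd t htc) (hF' t htc).differentiableAt
      rw [hd, (hF' t htc).deriv]
      have := hderiv t htc
      linarith [this]
  have hmem1 : γ / 2 ∈ Set.Icc (γ / 2) γ := ⟨le_refl _, by linarith⟩
  have hmem2 : γ ∈ Set.Icc (γ / 2) γ := ⟨by linarith, le_refl _⟩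
  have hgle := hmono hmem1 hmem2 (by linarith)
  -- f (γ/2) ≥ 0
  have hγ2 : γ / 2 ∈ Set.Ioo (0:ℝ) c := hsub hmem1
  have hf2 : 0 ≤ f (γ / 2) := Real.log_nonneg (hZ1 _ hγ2)
  have hkey : F γ - F (γ / 2) ≤ f γ := by
    have h : f (γ / 2) - F (γ / 2) ≤ f γ - F γ := hgle
    linarith
  -- arithmetic
  obtain ⟨hδ0, hδ1⟩ := hδ
  have hcγ : 0 < c - γ := by linarith
  have hcγ2 : 0 < c - γ / 2 := by linarith
  have hlog1 : Real.log (γ / 2) ≤ Real.log (c - γ / 2) :=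
    Real.log_le_log (by linarith) (by linarith)
  have hlog2 : -(2 * γ⁻¹) ≤ Real.log (γ / 2) := by
    have h2γ : (0:ℝ) < 2 / γ := by positivity
    have := Real.log_le_sub_one_of_pos h2γ
    have heq : Real.log (γ / 2) = -Real.log (2 / γ) := by
      rw [← Real.log_inv]
      norm_num
    rw [heq]
    have : Real.log (2 / γ) ≤ 2 * γ⁻¹ := by
      have h2 : 2 / γ = 2 * γ⁻¹ := by field_simp
      linarith [this, h2 ▸ this]
    linarith
  -- lower bound for f γ
  have hAinv : 0 < 1 / A := by positivity
  have hFγ : F γ - F (γ / 2) =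
      -(1 / A) * Real.log (c - γ) + (1 / A) * Real.log (c - γ / 2)
        - B * γ⁻¹ - B / 2 * δ⁻¹ ^ 2 * γ := by
    simp only [hFdef]
    have hγne : γ ≠ 0 := ne_of_gt hγ0
    have h2 : (γ / 2)⁻¹ = 2 * γ⁻¹ := by field_simp
    rw [h2]
    ring
  have hflow : -(1 / A) * Real.log (c - γ) - (2 / A) * γ⁻¹ - B * γ⁻¹ - B / 2 * δ⁻¹ ^ 2 * γ
      ≤ f γ := by
    have h1 : (1 / A) * Real.log (γ / 2) ≤ (1 / A) * Real.log (c - γ / 2) :=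
      mul_le_mul_of_nonneg_left hlog1 hAinv.le
    have h2 : (1 / A) * (-(2 * γ⁻¹)) ≤ (1 / A) * Real.log (γ / 2) :=
      mul_le_mul_of_nonneg_left hlog2 hAinv.le
    have h3 : (1 / A) * (-(2 * γ⁻¹)) = -(2 / A) * γ⁻¹ := by ring
    nlinarith [hkey, hFγ]
  -- conclude
  have hZpos : (0:ℝ) < Z γ := lt_of_lt_of_le one_pos (hZ1 γ ⟨hγ0, hγc⟩)
  have hZexp : Z γ = Real.exp (f γ) := by
    rw [hfdef]
    exact (Real.exp_log hZpos).symm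
  have hrpow : (c - γ) ^ (1 / A) = Real.exp ((1 / A) * Real.log (c - γ)) := by
    rw [Real.rpow_def_of_pos hcγ]
    ring_nf
  show Real.exp (-(2 / A + B) * (γ⁻¹ + γ * δ⁻¹ ^ 2)) / (c - γ) ^ (1 / A) ≤ Z γ
  rw [hrpow, ← Real.exp_sub, hZexp]
  apply Real.exp_le_exp.2
  have hγinv : 0 < γ⁻¹ := by positivity
  have hδinv : 0 < δ⁻¹ ^ 2 := by positivity
  have hextra : 0 ≤ (2 / A + B / 2) * (γ * δ⁻¹ ^ 2) := by positivity
  nlinarith [hflow, hextra]
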